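/- There are exactly 32 quadruples (n, c, d, i) satisfying the Arieli–Avron–Zamansky non-deterministic truth tables whose induced logical equivalence relation satisfies, for all formulas A, B, the eight laws (1) A ∧ F ≡ F; (2) A ∨ T ≡ T; (3) A ∧ T ≡ A; (4) A ∨ F ≡ A; (5) A ∧ A ≡ A; (6) A ∨ A ≡ A; (7) A ∧ B ≡ B ∧ A; (8) A ∨ B ≡ B ∨ A (with T := ¬F). -/

import Mathlib

/-- The three truth values: true, false, both-true-and-false. -/
inductive TV : Type
  | t : TV
  | f : TV
  | b : TV
  deriving DecidableEq

/-- Formulas of LP^{→,F}: propositional variables, falsity constant,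
    negation, conjunction, disjunction, implication. -/
inductive Fm : Type
  | var : ℕ → Fm
  | fls : Fm
  | neg : Fm → Fm
  | conj : Fm → Fm → Fm
  | disj : Fm → Fm → Fm
  | impl : Fm → Fm → Fm
  deriving DecidableEq

/-- The LP^{→,F} negation truth function. -/
def TV.negLP : TV → TV
  | .t => .f
  | .f => .t
  | .b => .b

/-- The LP^{→,F} conjunction truth function. -/
def TV.andLP : TV → TV → TV
  | .f, _ => .f
  | _, .f => .f
  | .t, .t => .t
  | _, _ => .b

/-- The LP^{→,F} disjunction truth function. -/
def TV.orLP : TV → TV → TV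
  | .t, _ => .t
  | _, .t => .t
  | .f, .f => .f
  | _, _ => .b

/-- The LP^{→,F} implication truth function: t if the antecedent is f,
    otherwise the value of the consequent. -/
def TV.implLP : TV → TV → TV
  | .f, _ => .t
  | _, y => y

/-- A valuation for LP^{→,F}. -/
def IsValuation (ν : Fm → TV) : Prop :=
  ν .fls = .f ∧
  (∀ A, ν (.neg A) = (ν A).negLP) ∧
  (∀ A B, ν (.conj A B) = (ν A).andLP (ν B)) ∧
  (∀ A B, ν (.disj A B) = (ν A).orLP (ν B)) ∧
  (∀ A B, ν (.impl A B) = (ν A).implLP (ν B))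

/-- Logical equivalence in LP^{→,F}. -/
def LEquiv (A B : Fm) : Prop := ∀ ν : Fm → TV, IsValuation ν → ν A = ν B

/-- The truth constant T, an abbreviation for ¬F. -/
def Fm.tru : Fm := .neg .fls

/-- A truth value is designated iff it is t or ⊤. -/
def Designated (v : TV) : Prop := v = .t ∨ v = .b

/-- Semantic logical consequence in LP^{→,F}. -/
def LPCons (Γ : Set Fm) (A : Fm) : Prop :=
  ∀ ν : Fm → TV, IsValuation ν → ((∃ B ∈ Γ, ν B = .f) ∨ Designated (ν A))

/-- Validity in LP^{→,F}. -/
def LPValid (A : Fm) : Prop := ∀ ν : Fm → TV, IsValuation ν → Designated (ν A)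

/-- A quadruple of truth functions on the three truth values. -/
structure Quad : Type where
  n : TV → TV
  c : TV → TV → TV
  d : TV → TV → TV
  i : TV → TV → TV

/-- The Arieli–Avron–Zamansky non-deterministic truth tables. -/
def AAZ (q : Quad) : Prop :=
  q.n .t = .f ∧ q.n .f = .t ∧ (q.n .b = .t ∨ q.n .b = .b) ∧
  (∀ y, q.c .f y = .f) ∧ (∀ x, q.c x .f = .f) ∧ q.c .t .t = .t ∧
  (q.c .t .b = .t ∨ q.c .t .b = .b) ∧
  (q.c .b .t = .t ∨ q.c .b .t = .b) ∧
  (q.c .b .b = .t ∨ q.c .b .b = .b) ∧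
  q.d .f .f = .f ∧ q.d .t .t = .t ∧ q.d .t .f = .t ∧ q.d .f .t = .t ∧
  (q.d .t .b = .t ∨ q.d .t .b = .b) ∧
  (q.d .b .t = .t ∨ q.d .b .t = .b) ∧
  (q.d .b .b = .t ∨ q.d .b .b = .b) ∧
  (q.d .b .f = .t ∨ q.d .b .f = .b) ∧
  (q.d .f .b = .t ∨ q.d .f .b = .b) ∧
  q.i .t .f = .f ∧ q.i .b .f = .f ∧
  q.i .f .f = .t ∧ q.i .f .t = .t ∧ q.i .t .t = .t ∧
  (q.i .f .b = .t ∨ q.i .f .b = .b) ∧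
  (q.i .t .b = .t ∨ q.i .t .b = .b) ∧
  (q.i .b .t = .t ∨ q.i .b .t = .b) ∧
  (q.i .b .b = .t ∨ q.i .b .b = .b)

/-- A valuation for the logic induced by the quadruple `q`. -/
def IsValuationQ (q : Quad) (ν : Fm → TV) : Prop :=
  ν .fls = .f ∧
  (∀ A, ν (.neg A) = q.n (ν A)) ∧
  (∀ A B, ν (.conj A B) = q.c (ν A) (ν B)) ∧
  (∀ A B, ν (.disj A B) = q.d (ν A) (ν B)) ∧
  (∀ A B, ν (.impl A B) = q.i (ν A) (ν B))

/-- Logical equivalence in the logic induced by the quadruple `q`. -/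
def LEquivQ (q : Quad) (A B : Fm) : Prop :=
  ∀ ν : Fm → TV, IsValuationQ q ν → ν A = ν B

/-- The quadruple of LP^{→,F}. -/
def lpQuad : Quad := ⟨TV.negLP, TV.andLP, TV.orLP, TV.implLP⟩

/-- Laws (1)–(8) for the logic induced by a quadruple. -/
def Laws8 (q : Quad) : Prop :=
  ∀ A B : Fm,
    LEquivQ q (A.conj .fls) .fls ∧
    LEquivQ q (A.disj Fm.tru) Fm.tru ∧
    LEquivQ q (A.conj Fm.tru) A ∧
    LEquivQ q (A.disj .fls) A ∧
    LEquivQ q (A.conj A) A ∧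
    LEquivQ q (A.disj A) A ∧
    LEquivQ q (A.conj B) (B.conj A) ∧
    LEquivQ q (A.disj B) (B.disj A)

/-! ### Auxiliary material for the proof -/

instance : Fintype TV :=
  ⟨{.t, .f, .b}, by intro x; cases x <;> simp⟩

instance : DecidableEq Quad := fun a b =>
  decidable_of_iff (a.n = b.n ∧ a.c = b.c ∧ a.d = b.d ∧ a.i = b.i)
    (by cases a; cases b; simp [Quad.mk.injEq])

theorem Quad.ext' {a b : Quad} (h1 : a.n = b.n) (h2 : a.c = b.c)
    (h3 : a.d = b.d) (h4 : a.i = b.i) : a = b := by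
  cases a; cases b; cases h1; cases h2; cases h3; cases h4; rfl

/-- Evaluation in the logic of `q` under assignment `σ`. -/
def evalQ (q : Quad) (σ : ℕ → TV) : Fm → TV
  | .var n => σ n
  | .fls => .f
  | .neg A => q.n (evalQ q σ A)
  | .conj A B => q.c (evalQ q σ A) (evalQ q σ B)
  | .disj A B => q.d (evalQ q σ A) (evalQ q σ B)
  | .impl A B => q.i (evalQ q σ A) (evalQ q σ B)

theorem evalQ_isValuation (q : Quad) (σ : ℕ → TV) : IsValuationQ q (evalQ q σ) := by
  refine ⟨rfl, ?_, ?_, ?_, ?_⟩ <;> intros <;> rfl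

def mkN (a : TV) : TV → TV
  | .t => .f
  | .f => .t
  | .b => a

def mkI (w x y z : TV) : TV → TV → TV
  | .t, .f => .f
  | .b, .f => .f
  | .f, .f => .t
  | .f, .t => .t
  | .t, .t => .t
  | .f, .b => w
  | .t, .b => x
  | .b, .t => y
  | .b, .b => z

def param : TV × TV × TV × TV × TV → Quad :=
  fun p => ⟨mkN p.1, TV.andLP, TV.orLP, mkI p.2.1 p.2.2.1 p.2.2.2.1 p.2.2.2.2⟩

def pset : Finset (TV × TV × TV × TV × TV) :=
  ({.t, .b} : Finset TV) ×ˢ ({.t, .b} : Finset TV) ×ˢ ({.t, .b} : Finset TV) ×ˢ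
    ({.t, .b} : Finset TV) ×ˢ ({.t, .b} : Finset TV)

instance (q : Quad) : Decidable (AAZ q) := by
  unfold AAZ; infer_instance

theorem laws8_of (q : Quad) (hc : q.c = TV.andLP) (hd : q.d = TV.orLP)
    (hnf : q.n .f = .t) : Laws8 q := by
  intro A B
  have htru : ∀ ν, IsValuationQ q ν → ν Fm.tru = .t := by
    intro ν ⟨h0, h1, _⟩
    rw [Fm.tru, h1, h0, hnf]
  refine ⟨?_, ?_, ?_, ?_, ?_, ?_, ?_, ?_⟩ <;>
    rintro ν hv <;> obtain ⟨h0, h1, h2, h3, h4⟩ := hv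
  · rw [h2, h0, hc]; cases ν A <;> rfl
  · rw [h3, htru ν ⟨h0, h1, h2, h3, h4⟩, hd]; cases ν A <;> rfl
  · rw [h2, htru ν ⟨h0, h1, h2, h3, h4⟩, hc]; cases ν A <;> rfl
  · rw [h3, h0, hd]; cases ν A <;> rfl
  · rw [h2, hc]; cases ν A <;> rfl
  · rw [h3, hd]; cases ν A <;> rfl
  · rw [h2, h2, hc]; cases ν A <;> cases ν B <;> rfl
  · rw [h3, h3, hd]; cases ν A <;> cases ν B <;> rfl

set_option maxHeartbeats 1000000 in
theorem target_eq : {q : Quad | AAZ q ∧ Laws8 q} = ↑(pset.image param) := by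
  ext q
  simp only [Set.mem_setOf_eq, Finset.coe_image, Set.mem_image, Finset.mem_coe]
  constructor
  · rintro ⟨haaz, hlaws⟩
    obtain ⟨hnt, hnf, hnb, hcf, hcf', hctt, hctb, hcbt, hcbb, hdff, hdtt, hdtf,
      hdft, hdtb, hdbt, hdbb, hdbf, hdfb, hitf, hibf, hiff, hift, hitt, hifb,
      hitb, hibt, hibb⟩ := haaz
    -- derive the forced values of c and d using laws at suitable valuations
    have hval : ∀ σ : ℕ → TV, IsValuationQ q (evalQ q σ) := evalQ_isValuation q
    have etru : ∀ σ, evalQ q σ Fm.tru = .t := by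
      intro σ; show q.n .f = .t; exact hnf
    -- c b t = b : law 3 with A = var 0, σ 0 = b
    have ecbt : q.c .b .t = .b := by
      have h := ((hlaws (.var 0) (.var 0)).2.2.1) (evalQ q (fun _ => .b)) (hval _)
      simpa [evalQ, hnf, Fm.tru] using h
    -- c t b = b : law 7 with A = var 0 ↦ t, B = var 1 ↦ b
    have ectb : q.c .t .b = .b := by
      have h := ((hlaws (.var 0) (.var 1)).2.2.2.2.2.2.1)
        (evalQ q (fun n => if n = 0 then .t else .b)) (hval _)
      simpa [evalQ, ecbt] using h
    -- c b b = b : law 5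
    have ecbb : q.c .b .b = .b := by
      have h := ((hlaws (.var 0) (.var 0)).2.2.2.2.1) (evalQ q (fun _ => .b)) (hval _)
      simpa [evalQ] using h
    -- d b t = t : law 2
    have edbt : q.d .b .t = .t := by
      have h := ((hlaws (.var 0) (.var 0)).2.1) (evalQ q (fun _ => .b)) (hval _)
      simpa [evalQ, hnf, Fm.tru] using h
    -- d t b = t : law 8
    have edtb : q.d .t .b = .t := by
      have h := ((hlaws (.var 0) (.var 1)).2.2.2.2.2.2.2)
        (evalQ q (fun n => if n = 0 then .t else .b)) (hval _)
      simpa [evalQ, edbt] using h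
    -- d b f = b : law 4
    have edbf : q.d .b .f = .b := by
      have h := ((hlaws (.var 0) (.var 0)).2.2.2.1) (evalQ q (fun _ => .b)) (hval _)
      simpa [evalQ] using h
    -- d f b = b : law 8
    have edfb : q.d .f .b = .b := by
      have h := ((hlaws (.var 0) (.var 1)).2.2.2.2.2.2.2)
        (evalQ q (fun n => if n = 0 then .f else .b)) (hval _)
      simpa [evalQ, edbf] using h
    -- d b b = b : law 6
    have edbb : q.d .b .b = .b := by
      have h := ((hlaws (.var 0) (.var 0)).2.2.2.2.2.1) (evalQ q (fun _ => .b)) (hval _)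
      simpa [evalQ] using h
    refine ⟨(q.n .b, q.i .f .b, q.i .t .b, q.i .b .t, q.i .b .b), ?_, ?_⟩
    · simp only [pset, Finset.mem_product, Finset.mem_insert, Finset.mem_singleton]
      exact ⟨hnb, hifb, hitb, hibt, hibb⟩
    · have hn : q.n = mkN (q.n .b) := by
        funext x; cases x <;> simp [mkN, hnt, hnf]
      have hc : q.c = TV.andLP := by
        funext x y
        cases x <;> cases y <;>
          simp [TV.andLP, hcf, hcf', hctt, ectb, ecbt, ecbb]
      have hd : q.d = TV.orLP := by
        funext x y
        cases x <;> cases y <;>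
          simp [TV.orLP, hdff, hdtt, hdtf, hdft, edtb, edbt, edbb, edbf, edfb]
      have hi : q.i = mkI (q.i .f .b) (q.i .t .b) (q.i .b .t) (q.i .b .b) := by
        funext x y
        cases x <;> cases y <;> simp [mkI, hitf, hibf, hiff, hift, hitt]
      exact Quad.ext' hn.symm hc.symm hd.symm hi.symm
  · rintro ⟨p, hp, rfl⟩
    refine ⟨?_, laws8_of _ rfl rfl rfl⟩
    simp only [pset, Finset.mem_product, Finset.mem_insert, Finset.mem_singleton] at hp
    obtain ⟨h1, h2, h3, h4, h5⟩ := hp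
    obtain ⟨a, w, x, y, z⟩ := p
    rcases h1 with rfl | rfl <;> rcases h2 with rfl | rfl <;>
      rcases h3 with rfl | rfl <;> rcases h4 with rfl | rfl <;>
      rcases h5 with rfl | rfl <;> decide

/-- Exactly 32 quadruples satisfying the AAZ non-deterministic truth tables
    induce a logical equivalence relation satisfying laws (1)–(8). -/
theorem thirtytwo_quads_laws_1_to_8 :
    {q : Quad | AAZ q ∧ Laws8 q}.ncard = 32 := by
  rw [target_eq, Set.ncard_coe_finset]
  decide
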